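/- arXiv:1212.2781 — 2 statements merged into one kernel-verified Lean document; each statement's English description precedes it below -/
import Mathlib

section
/- For N > 1, any distinct indices i₁,…,i_k ∈ {1,…,N} (with 0 ≤ k ≤ N−1) and any index s ∈ {1,…,k}, the sum over all i ∉ {i₁,…,i_k}, all s = 1,…,k, all permutations σ ∈ S_N with σ(i)=1, and all r with 2 ≤ r ≤ σ(i_s)−1 of the terms (−1)^σ · x_i^{N−r} · x_{i_s}^{N−σ(i_s)+r−1} · ∏_{j ≠ i, i_s} x_j^{N−σ(j)} equals zero. -/
open Finset Equiv

private lemma sum_invol {α β : Type*} [AddCommMonoid β] (s : Finset α) (f : α → β) (g : α → α)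
    (h : ∀ a ∈ s, f a + f (g a) = 0) (gmem : ∀ a ∈ s, g a ∈ s)
    (gne : ∀ a ∈ s, g a ≠ a) (ginv : ∀ a ∈ s, g (g a) = a) : ∑ x ∈ s, f x = 0 :=
  Finset.sum_involution (fun a _ => g a) h (fun a ha _ => gne a ha)
    (fun a ha => gmem a ha) (fun a ha => ginv a ha)

private def Tsum {R : Type*} [CommRing R] (N : ℕ) (x : Fin N → R) (i s : Fin N) : R :=
  ∑ σ ∈ Finset.univ.filter (fun σ : Equiv.Perm (Fin N) => (σ i : ℕ) = 0),
    ∑ r ∈ Finset.Icc 2 ((σ s : ℕ)),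
      ((Equiv.Perm.sign σ : ℤ) : R) * x i ^ (N - r) * x s ^ (N + r - ((σ s : ℕ) + 2)) *
        ∏ j ∈ Finset.univ \ {i, s}, x j ^ (N - 1 - (σ j : ℕ))

private lemma Tsum_row {R : Type*} [CommRing R] {N : ℕ} (hN : 0 < N) (x : Fin N → R)
    (s : Fin N) : ∑ i ∈ Finset.univ.erase s, Tsum N x i s = 0 := by
  simp only [Tsum, Finset.sum_sigma']
  refine sum_invol _ _
    (fun a => ⟨a.2.1.symm ⟨(a.2.2 - 1) % N, Nat.mod_lt _ hN⟩,
      ⟨a.2.1 * Equiv.swap a.1 (a.2.1.symm ⟨(a.2.2 - 1) % N, Nat.mod_lt _ hN⟩), a.2.2⟩⟩)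
    ?_ ?_ ?_ ?_
  · -- h : f a + f (g a) = 0
    rintro ⟨i, σ, r⟩ ha
    simp only [Finset.mem_sigma, Finset.mem_erase, Finset.mem_univ, and_true,
      Finset.mem_filter, true_and, Finset.mem_Icc] at ha
    obtain ⟨his, h0, hr2, hrm⟩ := ha
    dsimp only
    have hmN : (σ s : ℕ) < N := (σ s).isLt
    have hlt : r - 1 < N := by omega
    have hfin : (⟨(r - 1) % N, Nat.mod_lt _ hN⟩ : Fin N) = ⟨r - 1, hlt⟩ := by
      ext; simp [Nat.mod_eq_of_lt hlt]
    simp only [hfin]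
    set j₀ := σ.symm ⟨r - 1, hlt⟩ with hj₀
    have hσj₀ : σ j₀ = ⟨r - 1, hlt⟩ := Equiv.apply_symm_apply σ _
    have hσj₀v : (σ j₀ : ℕ) = r - 1 := by rw [hσj₀]
    have hj₀i : j₀ ≠ i := by
      intro h; rw [h] at hσj₀v; omega
    have hj₀s : j₀ ≠ s := by
      intro h; rw [h] at hσj₀v; omega
    have hσ's : ((σ * Equiv.swap i j₀) s : ℕ) = (σ s : ℕ) := by
      rw [Equiv.Perm.mul_apply, Equiv.swap_apply_of_ne_of_ne (Ne.symm his) (Ne.symm hj₀s)]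
    have hσ'i : ((σ * Equiv.swap i j₀) i : ℕ) = r - 1 := by
      rw [Equiv.Perm.mul_apply, Equiv.swap_apply_left, hσj₀v]
    have hsign : ((Equiv.Perm.sign (σ * Equiv.swap i j₀) : ℤ) : R)
        = -((Equiv.Perm.sign σ : ℤ) : R) := by
      rw [Equiv.Perm.sign_mul, Equiv.Perm.sign_swap (Ne.symm hj₀i)]
      push_cast
      ring
    have hset1 : (Finset.univ \ {i, s} : Finset (Fin N)) = (Finset.univ.erase s).erase i := by
      rw [show ({i, s} : Finset (Fin N)) = insert i {s} from rfl, Finset.sdiff_insert,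
        Finset.sdiff_singleton_eq_erase]
    have hset2 : (Finset.univ \ {j₀, s} : Finset (Fin N)) = (Finset.univ.erase s).erase j₀ := by
      rw [show ({j₀, s} : Finset (Fin N)) = insert j₀ {s} from rfl, Finset.sdiff_insert,
        Finset.sdiff_singleton_eq_erase]
    have him : i ∈ Finset.univ.erase s := Finset.mem_erase.2 ⟨his, Finset.mem_univ i⟩
    have hj₀m : j₀ ∈ Finset.univ.erase s := Finset.mem_erase.2 ⟨hj₀s, Finset.mem_univ j₀⟩
    have e1 : x i ^ (N - r) * ∏ j ∈ (Finset.univ.erase s).erase i, x j ^ (N - 1 - (σ j : ℕ))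
        = ∏ j ∈ Finset.univ.erase s,
            x j ^ (if j = i then N - r else N - 1 - (σ j : ℕ)) := by
      rw [← Finset.mul_prod_erase _ (fun j => x j ^ (if j = i then N - r else N - 1 - (σ j : ℕ))) him]
      refine congrArg₂ (· * ·) (by simp) (Finset.prod_congr rfl fun j hj => ?_)
      rw [if_neg (Finset.ne_of_mem_erase hj)]
    have e2 : x j₀ ^ (N - r) * ∏ j ∈ (Finset.univ.erase s).erase j₀,
          x j ^ (N - 1 - ((σ * Equiv.swap i j₀) j : ℕ))
        = ∏ j ∈ Finset.univ.erase s,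
            x j ^ (if j = j₀ then N - r else N - 1 - ((σ * Equiv.swap i j₀) j : ℕ)) := by
      rw [← Finset.mul_prod_erase _
        (fun j => x j ^ (if j = j₀ then N - r else N - 1 - ((σ * Equiv.swap i j₀) j : ℕ))) hj₀m]
      refine congrArg₂ (· * ·) (by simp) (Finset.prod_congr rfl fun j hj => ?_)
      rw [if_neg (Finset.ne_of_mem_erase hj)]
    have e3 : ∏ j ∈ Finset.univ.erase s,
          x j ^ (if j = i then N - r else N - 1 - (σ j : ℕ))
        = ∏ j ∈ Finset.univ.erase s,
            x j ^ (if j = j₀ then N - r else N - 1 - ((σ * Equiv.swap i j₀) j : ℕ)) := by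
      refine Finset.prod_congr rfl fun j _ => ?_
      rcases eq_or_ne j i with rfl | hji
      · rw [if_pos rfl, if_neg (Ne.symm hj₀i), hσ'i]
        congr 1
        omega
      · rcases eq_or_ne j j₀ with rfl | hjj₀
        · rw [if_neg hji, if_pos rfl, hσj₀v]
          congr 1
          omega
        · rw [if_neg hji, if_neg hjj₀, Equiv.Perm.mul_apply,
            Equiv.swap_apply_of_ne_of_ne hji hjj₀]
    have key : x i ^ (N - r) * ∏ j ∈ Finset.univ \ {i, s}, x j ^ (N - 1 - (σ j : ℕ))
        = x j₀ ^ (N - r) * ∏ j ∈ Finset.univ \ {j₀, s},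
            x j ^ (N - 1 - ((σ * Equiv.swap i j₀) j : ℕ)) := by
      rw [hset1, hset2, e1, e2, e3]
    simp only [hσ's, hsign]
    linear_combination (((Equiv.Perm.sign σ : ℤ) : R) * x s ^ (N + r - ((σ s : ℕ) + 2))) * key
  · -- gmem
    rintro ⟨i, σ, r⟩ ha
    simp only [Finset.mem_sigma, Finset.mem_erase, Finset.mem_univ, and_true,
      Finset.mem_filter, true_and, Finset.mem_Icc] at ha ⊢
    obtain ⟨his, h0, hr2, hrm⟩ := ha
    have hmN : (σ s : ℕ) < N := (σ s).isLt
    have hlt : r - 1 < N := by omega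
    have hfin : (⟨(r - 1) % N, Nat.mod_lt _ hN⟩ : Fin N) = ⟨r - 1, hlt⟩ := by
      ext; simp [Nat.mod_eq_of_lt hlt]
    rw [hfin]
    set j₀ := σ.symm ⟨r - 1, hlt⟩ with hj₀
    have hσj₀ : σ j₀ = ⟨r - 1, hlt⟩ := Equiv.apply_symm_apply σ _
    have hj₀s : j₀ ≠ s := by
      intro h; rw [h] at hσj₀
      have : (σ s : ℕ) = r - 1 := by rw [hσj₀]
      omega
    refine ⟨hj₀s, ?_, ?_⟩
    · rw [Equiv.Perm.mul_apply, Equiv.swap_apply_right, h0]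
    · have : (σ * Equiv.swap i j₀) s = σ s := by
        rw [Equiv.Perm.mul_apply, Equiv.swap_apply_of_ne_of_ne (Ne.symm his) (Ne.symm hj₀s)]
      rw [this]; exact ⟨hr2, hrm⟩
  · -- gne
    rintro ⟨i, σ, r⟩ ha
    simp only [Finset.mem_sigma, Finset.mem_erase, Finset.mem_univ, and_true,
      Finset.mem_filter, true_and, Finset.mem_Icc] at ha
    obtain ⟨his, h0, hr2, hrm⟩ := ha
    have hmN : (σ s : ℕ) < N := (σ s).isLt
    have hlt : r - 1 < N := by omega
    have hfin : (⟨(r - 1) % N, Nat.mod_lt _ hN⟩ : Fin N) = ⟨r - 1, hlt⟩ := by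
      ext; simp [Nat.mod_eq_of_lt hlt]
    intro hcon
    have h1 : σ.symm ⟨(r - 1) % N, Nat.mod_lt _ hN⟩ = i := congrArg Sigma.fst hcon
    rw [hfin] at h1
    have h2 : σ i = ⟨r - 1, hlt⟩ := by
      rw [← h1, Equiv.apply_symm_apply]
    have : (σ i : ℕ) = r - 1 := by rw [h2]
    omega
  · -- ginv
    rintro ⟨i, σ, r⟩ ha
    simp only [Finset.mem_sigma, Finset.mem_erase, Finset.mem_univ, and_true,
      Finset.mem_filter, true_and, Finset.mem_Icc] at ha
    obtain ⟨his, h0, hr2, hrm⟩ := ha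
    dsimp only
    have hmN : (σ s : ℕ) < N := (σ s).isLt
    have hlt : r - 1 < N := by omega
    have hfin : (⟨(r - 1) % N, Nat.mod_lt _ hN⟩ : Fin N) = ⟨r - 1, hlt⟩ := by
      ext; simp [Nat.mod_eq_of_lt hlt]
    simp only [hfin]
    set j₀ := σ.symm ⟨r - 1, hlt⟩ with hj₀
    have hσj₀ : σ j₀ = ⟨r - 1, hlt⟩ := Equiv.apply_symm_apply σ _
    have hsym : (σ * Equiv.swap i j₀).symm ⟨r - 1, hlt⟩ = i := by
      rw [Equiv.symm_apply_eq]
      rw [Equiv.Perm.mul_apply, Equiv.swap_apply_left, hσj₀]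
    rw [hsym]
    have hswap : σ * Equiv.swap i j₀ * Equiv.swap j₀ i = σ := by
      rw [Equiv.swap_comm j₀ i, mul_assoc, Equiv.swap_mul_self, mul_one]
    simp only [hswap]

private lemma Tsum_antisymm {R : Type*} [CommRing R] {N : ℕ} (x : Fin N → R) {i s : Fin N}
    (hne : i ≠ s) : Tsum N x s i = - Tsum N x i s := by
  rw [Tsum, Tsum]
  simp only [Finset.sum_sigma']
  rw [← Finset.sum_neg_distrib]
  refine Finset.sum_nbij' (fun p => ⟨p.1 * Equiv.swap i s, (p.1 i : ℕ) + 2 - p.2⟩)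
    (fun p => ⟨p.1 * Equiv.swap i s, (p.1 s : ℕ) + 2 - p.2⟩) ?_ ?_ ?_ ?_ ?_
  · rintro ⟨σ, r⟩ hmem
    simp only [Finset.mem_sigma, Finset.mem_filter, Finset.mem_univ, true_and,
      Finset.mem_Icc] at hmem ⊢
    obtain ⟨h0, hr2, hrm⟩ := hmem
    constructor
    · simp [Equiv.Perm.mul_apply, Equiv.swap_apply_left, h0]
    · have : ((σ * Equiv.swap i s) s : ℕ) = (σ i : ℕ) := by
        simp [Equiv.Perm.mul_apply, Equiv.swap_apply_right]
      rw [this]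
      omega
  · rintro ⟨σ, r⟩ hmem
    simp only [Finset.mem_sigma, Finset.mem_filter, Finset.mem_univ, true_and,
      Finset.mem_Icc] at hmem ⊢
    obtain ⟨h0, hr2, hrm⟩ := hmem
    constructor
    · simp [Equiv.Perm.mul_apply, Equiv.swap_apply_left, h0]
    · have : ((σ * Equiv.swap i s) i : ℕ) = (σ s : ℕ) := by
        simp [Equiv.Perm.mul_apply, Equiv.swap_apply_left]
      rw [this]
      omega
  · rintro ⟨σ, r⟩ hmem
    simp only [Finset.mem_sigma, Finset.mem_filter, Finset.mem_univ, true_and,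
      Finset.mem_Icc] at hmem
    obtain ⟨h0, hr2, hrm⟩ := hmem
    have h1 : σ * Equiv.swap i s * Equiv.swap i s = σ := by
      rw [mul_assoc, Equiv.swap_mul_self, mul_one]
    have h2 : ((σ * Equiv.swap i s) s : ℕ) = (σ i : ℕ) := by
      simp [Equiv.Perm.mul_apply, Equiv.swap_apply_right]
    simp only [h1, h2]
    congr 1
    omega
  · rintro ⟨σ, r⟩ hmem
    simp only [Finset.mem_sigma, Finset.mem_filter, Finset.mem_univ, true_and,
      Finset.mem_Icc] at hmem
    obtain ⟨h0, hr2, hrm⟩ := hmem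
    have h1 : σ * Equiv.swap i s * Equiv.swap i s = σ := by
      rw [mul_assoc, Equiv.swap_mul_self, mul_one]
    have h2 : ((σ * Equiv.swap i s) i : ℕ) = (σ s : ℕ) := by
      simp [Equiv.Perm.mul_apply, Equiv.swap_apply_left]
    simp only [h1, h2]
    congr 1
    omega
  · rintro ⟨σ, r⟩ hmem
    simp only [Finset.mem_sigma, Finset.mem_filter, Finset.mem_univ, true_and,
      Finset.mem_Icc] at hmem
    obtain ⟨h0, hr2, hrm⟩ := hmem
    have hmN : (σ i : ℕ) < N := (σ i).isLt
    have hσs : ((σ * Equiv.swap i s) s : ℕ) = (σ i : ℕ) := by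
      simp [Equiv.Perm.mul_apply, Equiv.swap_apply_right]
    have hsign : ((Equiv.Perm.sign (σ * Equiv.swap i s) : ℤ) : R)
        = -((Equiv.Perm.sign σ : ℤ) : R) := by
      rw [Equiv.Perm.sign_mul, Equiv.Perm.sign_swap hne]
      push_cast
      ring
    have hset : (Finset.univ \ {s, i} : Finset (Fin N)) = Finset.univ \ {i, s} := by
      rw [Finset.pair_comm]
    have hprod : ∏ j ∈ Finset.univ \ {i, s}, x j ^ (N - 1 - (((σ * Equiv.swap i s) j : ℕ)))
        = ∏ j ∈ Finset.univ \ {i, s}, x j ^ (N - 1 - ((σ j : ℕ))) := by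
      refine Finset.prod_congr rfl fun j hj => ?_
      simp only [Finset.mem_sdiff, Finset.mem_insert, Finset.mem_singleton, not_or] at hj
      rw [Equiv.Perm.mul_apply, Equiv.swap_apply_of_ne_of_ne hj.2.1 hj.2.2]
    have e1 : N - ((σ i : ℕ) + 2 - r) = N + r - ((σ i : ℕ) + 2) := by omega
    have e2 : N + ((σ i : ℕ) + 2 - r) - (((σ i : ℕ)) + 2) = N - r := by omega
    simp only [hσs, hsign, hset, hprod, e1, e2]
    ring


/-- for `N > 1` and distinct indices `i₁,…,i_k` (given by an
embedding `ι : Fin k ↪ Fin N`, `k ≤ N−1`), the sum over all `i ∉ {i₁,…,i_k}`,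
all `s ∈ {1,…,k}`, all permutations `σ ∈ S_N` with `σ(i) = 1`, and all `r` with
`2 ≤ r ≤ σ(i_s) − 1`, of
`(−1)^σ · x_i^{N−r} · x_{i_s}^{N−σ(i_s)+r−1} · ∏_{j ≠ i, i_s} x_j^{N−σ(j)}`
equals zero.  Here `σ` is 1-indexed via `σ₁(j) = (σ j : ℕ) + 1`, so `σ(i)=1`
reads `(σ i : ℕ) = 0` and `σ(i_s) − 1 = (σ (ι s) : ℕ)`. -/
theorem stmt_4 {R : Type*} [CommRing R] (N k : ℕ) (hN : 1 < N) (hk : k ≤ N - 1)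
    (ι : Fin k ↪ Fin N) (x : Fin N → R) :
    ∑ i ∈ Finset.univ.filter (fun i : Fin N => ∀ t, i ≠ ι t),
      ∑ s : Fin k,
        ∑ σ ∈ Finset.univ.filter (fun σ : Equiv.Perm (Fin N) => (σ i : ℕ) = 0),
          ∑ r ∈ Finset.Icc 2 ((σ (ι s) : ℕ)),
            ((Equiv.Perm.sign σ : ℤ) : R) * x i ^ (N - r) *
              x (ι s) ^ (N + r - ((σ (ι s) : ℕ) + 2)) *
              ∏ j ∈ Finset.univ \ {i, ι s}, x j ^ (N - 1 - (σ j : ℕ))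
      = 0 := by
  have hN0 : 0 < N := by omega
  show ∑ i ∈ Finset.univ.filter (fun i : Fin N => ∀ t, i ≠ ι t),
      ∑ s : Fin k, Tsum N x i (ι s) = 0
  rw [Finset.sum_comm]
  have hstep : ∀ s : Fin k,
      ∑ i ∈ Finset.univ.filter (fun i : Fin N => ∀ t, i ≠ ι t), Tsum N x i (ι s)
        = - ∑ t ∈ Finset.univ.erase s, Tsum N x (ι t) (ι s) := by
    intro s
    have hsub : Finset.univ.filter (fun i : Fin N => ∀ t, i ≠ ι t)
        ⊆ Finset.univ.erase (ι s) := by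
      intro j hj
      simp only [Finset.mem_filter, Finset.mem_univ, true_and] at hj
      exact Finset.mem_erase.2 ⟨hj s, Finset.mem_univ j⟩
    have hd : Finset.univ.erase (ι s) \ Finset.univ.filter (fun i : Fin N => ∀ t, i ≠ ι t)
        = Finset.image ι (Finset.univ.erase s) := by
      ext j
      simp only [Finset.mem_sdiff, Finset.mem_erase, Finset.mem_univ, and_true, true_and,
        Finset.mem_filter, Finset.mem_image, not_forall, not_not]
      constructor
      · rintro ⟨hjs, t, ht⟩
        refine ⟨t, ?_, ht.symm⟩
        rintro rfl
        exact hjs ht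
      · rintro ⟨t, hts, rfl⟩
        exact ⟨fun h => hts (ι.injective h), t, rfl⟩
    have h0 := Tsum_row hN0 x (ι s)
    have hsd := Finset.sum_sdiff (f := fun i => Tsum N x i (ι s)) hsub
    rw [hd, Finset.sum_image (fun a _ b _ h => ι.injective h), h0] at hsd
    linear_combination hsd
  rw [Finset.sum_congr rfl (fun s _ => hstep s), Finset.sum_neg_distrib, neg_eq_zero]
  simp only [Finset.sum_sigma']
  refine sum_invol _ _ (fun p => ⟨p.2, p.1⟩) ?_ ?_ ?_ ?_
  · rintro ⟨a, b⟩ hab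
    simp only [Finset.mem_sigma, Finset.mem_univ, true_and, Finset.mem_erase] at hab
    dsimp only
    have hne : ι b ≠ ι a := fun h => hab.1 (ι.injective h)
    have := Tsum_antisymm x hne
    rw [this]
    ring
  · rintro ⟨a, b⟩ hab
    simp only [Finset.mem_sigma, Finset.mem_univ, true_and, Finset.mem_erase, and_true] at hab ⊢
    exact Ne.symm hab
  · rintro ⟨a, b⟩ hab
    simp only [Finset.mem_sigma, Finset.mem_univ, true_and, Finset.mem_erase, and_true] at hab
    intro hcon
    exact hab (congrArg Sigma.fst hcon :)
  · rintro ⟨a, b⟩ _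
    rfl
end

section
/- For N > 1 and fixed distinct indices i₁,…,i_k ∈ {1,…,N}, the sum over s ∈ {1,…,k} and over i ∈ {1,…,N} \ {i₁,…,i_k} of the rational functions ( (−1)^{i+1} x_i^{N−1} x_{i_s} Δ_i + (−1)^{i_s+1} x_{i_s}^{N−1} x_i Δ_{i_s} ) / ( x_i − x_{i_s} ) is equal to zero, where Δ_j = Δ(x₁,…,x̂_j,…,x_N) is the Vandermonde polynomial with the variable x_j omitted. -/
open Finset MvPolynomial Polynomial Matrix

section Aux

variable {K : Type*} [Field K]

/-- Telescoping identity for the difference of two products over a linearly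
ordered finite index set. -/
lemma telescope_prod {ι : Type*} [LinearOrder ι] (S : Finset ι) (A B : ι → K) :
    ∏ a ∈ S, A a - ∏ a ∈ S, B a =
      ∑ b ∈ S, (A b - B b) * ((∏ a ∈ S.filter (· < b), A a) *
        ∏ a ∈ S.filter (b < ·), B a) := by
  classical
  refine Finset.induction_on_min S (by simp) ?_
  intro c s hc ih
  · have hcs : c ∉ s := fun h => lt_irrefl c (hc c h)
    rw [Finset.prod_insert hcs, Finset.prod_insert hcs, Finset.sum_insert hcs]
    have h1 : (insert c s).filter (· < c) = ∅ := by
      apply Finset.eq_empty_of_forall_notMem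
      intro a ha
      rcases Finset.mem_filter.mp ha with ⟨ha1, ha2⟩
      rcases Finset.mem_insert.mp ha1 with rfl | h
      · exact lt_irrefl _ ha2
      · exact absurd (lt_trans (hc a h) ha2) (lt_irrefl c)
    have h2 : (insert c s).filter (c < ·) = s := by
      ext a
      simp only [Finset.mem_filter, Finset.mem_insert]
      constructor
      · rintro ⟨rfl | h, hlt⟩
        · exact absurd hlt (lt_irrefl _)
        · exact h
      · exact fun h => ⟨Or.inr h, hc a h⟩
    have h3 : ∀ b ∈ s, (insert c s).filter (· < b) = insert c (s.filter (· < b)) := by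
      intro b hb
      ext a
      simp only [Finset.mem_filter, Finset.mem_insert]
      constructor
      · rintro ⟨rfl | h, hlt⟩
        · exact Or.inl rfl
        · exact Or.inr ⟨h, hlt⟩
      · rintro (rfl | ⟨hm, hlt⟩)
        · exact ⟨Or.inl rfl, hc b hb⟩
        · exact ⟨Or.inr hm, hlt⟩
    have h4 : ∀ b ∈ s, (insert c s).filter (b < ·) = s.filter (b < ·) := by
      intro b hb
      ext a
      simp only [Finset.mem_filter, Finset.mem_insert]
      constructor
      · rintro ⟨rfl | h, hlt⟩
        · exact absurd (lt_trans (hc b hb) hlt) (lt_irrefl _)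
        · exact ⟨h, hlt⟩
      · exact fun ⟨hm, hlt⟩ => ⟨Or.inr hm, hlt⟩
    rw [h1, h2, Finset.prod_empty, one_mul]
    rw [Finset.sum_congr rfl fun b hb => by
      rw [h3 b hb, h4 b hb, Finset.prod_insert (fun h => hcs (Finset.mem_filter.mp h).1)]]
    have expand : ∑ b ∈ s, (A b - B b) * (A c * ∏ a ∈ s.filter (· < b), A a) *
        ∏ a ∈ s.filter (b < ·), B a = A c * ∑ b ∈ s, (A b - B b) *
          ((∏ a ∈ s.filter (· < b), A a) * ∏ a ∈ s.filter (b < ·), B a) := by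
      rw [Finset.mul_sum]; exact Finset.sum_congr rfl fun b _ => by ring
    calc A c * ∏ a ∈ s, A a - B c * ∏ a ∈ s, B a
        = (A c - B c) * ∏ a ∈ s, B a +
            A c * (∏ a ∈ s, A a - ∏ a ∈ s, B a) := by ring
      _ = (A c - B c) * ∏ a ∈ s, B a +
          ∑ b ∈ s, (A b - B b) * ((A c * ∏ a ∈ s.filter (· < b), A a) *
            ∏ a ∈ s.filter (b < ·), B a) := by
          rw [ih, Finset.mul_sum]
          congr 1
          exact Finset.sum_congr rfl fun b _ => by ring

end Aux

section Main

variable {K : Type*} [Field K] {n : ℕ}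

/-- The Vandermonde polynomial (Mathlib orientation) with the `j`-th variable omitted. -/
noncomputable def Wv (y : Fin (n + 2) → K) (j : Fin (n + 2)) : K :=
  ∏ a : Fin (n + 1), ∏ b ∈ Finset.Ioi a, (y (j.succAbove b) - y (j.succAbove a))

/-- Cofactor expansion fact: for a polynomial of degree `≤ n`,
`∑ j, (-1)^j * W j * p(y j) = 0`. -/
lemma key_F0 (y : Fin (n + 2) → K) (p : Polynomial K) (hp : p.natDegree < n + 1) :
    ∑ j : Fin (n + 2), (-1 : K) ^ (j : ℕ) * Wv y j * p.eval (y j) = 0 := by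
  classical
  set V0 : Matrix (Fin (n + 2)) (Fin (n + 2)) K :=
    Matrix.of fun r i => y i ^ (r : ℕ) with hV0
  set c : Fin (n + 2) → K := fun k => if (k : ℕ) < n + 1 then p.coeff k else 0 with hc
  have hrow : (fun i => p.eval (y i)) = ∑ k : Fin (n + 2), c k • V0 k := by
    funext i
    rw [Polynomial.eval_eq_sum_range' (lt_trans hp (Nat.lt_succ_self _))]
    rw [Finset.sum_apply]
    rw [← Fin.sum_univ_eq_sum_range (fun m => p.coeff m * y i ^ m)]
    refine Finset.sum_congr rfl fun k _ => ?_
    simp only [Pi.smul_apply, smul_eq_mul, hc, hV0, Matrix.of_apply]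
    split_ifs with h
    · rfl
    · push_neg at h
      rw [p.coeff_eq_zero_of_natDegree_lt (lt_of_lt_of_le hp h), zero_mul]
  set M : Matrix (Fin (n + 2)) (Fin (n + 2)) K :=
    V0.updateRow (Fin.last (n + 1)) (fun i => p.eval (y i)) with hM
  have hdet : M.det = 0 := by
    rw [hM, hrow, Matrix.det_updateRow_sum]
    have : c (Fin.last (n + 1)) = 0 := by
      simp [hc, Fin.val_last]
    rw [this, zero_smul]
  have hlap := Matrix.det_succ_row M (Fin.last (n + 1))
  rw [hdet] at hlap
  have hminor : ∀ j : Fin (n + 2),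
      (M.submatrix (Fin.last (n + 1)).succAbove j.succAbove).det = Wv y j := by
    intro j
    have hsub : M.submatrix (Fin.last (n + 1)).succAbove j.succAbove =
        (Matrix.vandermonde (fun a => y (j.succAbove a)))ᵀ := by
      ext r a
      simp only [Matrix.submatrix_apply, Fin.succAbove_last, Matrix.transpose_apply,
        Matrix.vandermonde_apply, hM]
      rw [Matrix.updateRow_ne (Fin.castSucc_lt_last r).ne]
      rfl
    rw [hsub, Matrix.det_transpose, Matrix.det_vandermonde]
    rfl
  have hMlast : ∀ j, M (Fin.last (n + 1)) j = p.eval (y j) := by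
    intro j; rw [hM, Matrix.updateRow_self]
  rw [Finset.sum_congr rfl (fun j _ => by rw [hminor j, hMlast j])] at hlap
  have hfac : ∀ j : Fin (n + 2),
      (-1 : K) ^ ((Fin.last (n + 1) : Fin (n + 2)) + (j : Fin (n+2)) : ℕ) * p.eval (y j) * Wv y j
        = (-1 : K) ^ (n + 1) * ((-1 : K) ^ (j : ℕ) * Wv y j * p.eval (y j)) := by
    intro j
    rw [pow_add]
    simp [Fin.val_last]
    ring
  rw [Finset.sum_congr rfl (fun j _ => hfac j), ← Finset.mul_sum] at hlap
  rcases mul_eq_zero.mp hlap.symm with h | h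
  · exact absurd h (pow_ne_zero _ (neg_ne_zero.mpr one_ne_zero))
  · exact h

/-- Key identity C: `∑_{i ≠ j} (D i + D j)/(y i - y j) = 0`. -/
lemma key_C (y : Fin (n + 2) → K) (hy : Function.Injective y) (j : Fin (n + 2)) :
    ∑ i ∈ Finset.univ.erase j,
        ((-1 : K) ^ (i : ℕ) * Wv y i + (-1 : K) ^ (j : ℕ) * Wv y j) / (y i - y j) = 0 := by
  classical
  set S : Finset (Fin (n + 2)) := Finset.univ.erase j with hS
  set D : Fin (n + 2) → K := fun i => (-1 : K) ^ (i : ℕ) * Wv y i with hD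
  have hne : ∀ i ∈ S, y i - y j ≠ 0 := fun i hi =>
    sub_ne_zero_of_ne (fun h => (Finset.mem_erase.mp hi).1 (hy h))
  set P : K := ∏ a ∈ S, (y a - y j) with hP
  have hPne : P ≠ 0 := Finset.prod_ne_zero_iff.mpr hne
  set v : Fin (n + 2) → K := fun i => ∏ a ∈ S.erase i, (y a - y j) with hv
  -- the interpolating polynomial φ
  set φ : Polynomial K := ∑ b ∈ S, Polynomial.C (∏ a ∈ S.filter (· < b), (y a - y j)) *
      ∏ a ∈ S.filter (b < ·), (Polynomial.C (y a) - Polynomial.X) with hφ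
  have hdeg : φ.natDegree < n + 1 := by
    rw [hφ]
    apply Nat.lt_succ_of_le
    apply Polynomial.natDegree_sum_le_of_forall_le
    intro b hb
    refine le_trans (Polynomial.natDegree_mul_le) ?_
    rw [Polynomial.natDegree_C, zero_add]
    refine le_trans (Polynomial.natDegree_prod_le _ _) ?_
    refine le_trans (Finset.sum_le_card_nsmul _ _ 1 (fun a _ => ?_)) ?_
    · refine le_trans (Polynomial.natDegree_sub_le _ _) ?_
      simp [Polynomial.natDegree_C, Polynomial.natDegree_X]
    · simp only [smul_eq_mul, mul_one]
      have hsub : S.filter (b < ·) ⊆ S.erase b := by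
        intro a ha
        rcases Finset.mem_filter.mp ha with ⟨h1, h2⟩
        exact Finset.mem_erase.mpr ⟨ne_of_gt h2, h1⟩
      refine le_trans (Finset.card_le_card hsub) ?_
      rw [Finset.card_erase_of_mem hb, hS, Finset.card_erase_of_mem (Finset.mem_univ j)]
      simp
  have heval : ∀ t : K, φ.eval t = ∑ b ∈ S, (∏ a ∈ S.filter (· < b), (y a - y j)) *
      ∏ a ∈ S.filter (b < ·), (y a - t) := by
    intro t
    rw [hφ, Polynomial.eval_finset_sum]
    refine Finset.sum_congr rfl fun b _ => ?_
    rw [Polynomial.eval_mul, Polynomial.eval_C, Polynomial.eval_prod]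
    congr 1
    exact Finset.prod_congr rfl fun a _ => by
      rw [Polynomial.eval_sub, Polynomial.eval_C, Polynomial.eval_X]
  have heval_i : ∀ i ∈ S, φ.eval (y i) = v i := by
    intro i hi
    have htel := telescope_prod S (fun a => y a - y j) (fun a => y a - y i)
    have hzero : ∏ a ∈ S, (y a - y i) = 0 :=
      Finset.prod_eq_zero hi (sub_self (y i))
    have hconst : ∀ b ∈ S, (y b - y j) - (y b - y i) = y i - y j := fun b _ => by ring
    rw [hzero, sub_zero, Finset.sum_congr rfl (fun b hb => by rw [hconst b hb])] at htel
    rw [← Finset.mul_sum] at htel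
    have hPv : P = (y i - y j) * v i := (Finset.mul_prod_erase S _ hi).symm
    refine mul_left_cancel₀ (hne i hi) ?_
    rw [heval (y i), ← htel, ← hP]
    exact hPv
  have heval_j : φ.eval (y j) = ∑ b ∈ S, v b := by
    rw [heval (y j)]
    refine Finset.sum_congr rfl fun b hb => ?_
    have hunion : S.erase b = S.filter (· < b) ∪ S.filter (b < ·) := by
      ext a
      simp only [Finset.mem_erase, Finset.mem_union, Finset.mem_filter]
      constructor
      · rintro ⟨h1, h2⟩
        rcases lt_or_gt_of_ne h1 with h | h
        · exact Or.inl ⟨h2, h⟩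
        · exact Or.inr ⟨h2, h⟩
      · rintro (⟨h1, h2⟩ | ⟨h1, h2⟩)
        · exact ⟨ne_of_lt h2, h1⟩
        · exact ⟨ne_of_gt h2, h1⟩
    have hdisj : Disjoint (S.filter (· < b)) (S.filter (b < ·)) := by
      rw [Finset.disjoint_left]
      intro a h1 h2
      exact absurd ((Finset.mem_filter.mp h1).2.trans (Finset.mem_filter.mp h2).2)
        (lt_irrefl a)
    show _ = ∏ a ∈ S.erase b, (y a - y j)
    rw [hunion, Finset.prod_union hdisj]
  -- conclude
  have hF0 := key_F0 y φ hdeg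
  have hsplit : ∑ i : Fin (n + 2), (-1 : K) ^ (i : ℕ) * Wv y i * φ.eval (y i)
      = D j * φ.eval (y j) + ∑ i ∈ S, D i * φ.eval (y i) := by
    rw [hS, ← Finset.add_sum_erase _ _ (Finset.mem_univ j)]
  rw [hsplit] at hF0
  have hsum_v : ∑ i ∈ S, D i * v i = - (D j * ∑ b ∈ S, v b) := by
    have := hF0
    rw [Finset.sum_congr rfl (fun i hi => by rw [heval_i i hi]), heval_j] at this
    linear_combination this
  have hterm : ∀ i ∈ S, (D i + D j) / (y i - y j) = ((D i + D j) * v i) / P := by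
    intro i hi
    rw [div_eq_div_iff (hne i hi) hPne]
    have hPv : P = (y i - y j) * v i := (Finset.mul_prod_erase S _ hi).symm
    rw [hPv]; ring
  rw [Finset.sum_congr rfl hterm, ← Finset.sum_div]
  have : ∑ i ∈ S, (D i + D j) * v i = 0 := by
    rw [Finset.sum_congr rfl (fun i _ => by ring :
      ∀ i ∈ S, (D i + D j) * v i = D i * v i + D j * v i)]
    rw [Finset.sum_add_distrib, hsum_v, ← Finset.mul_sum]
    ring
  rw [this, zero_div]

end Main

section Main2

variable {K : Type*} [Field K] {n : ℕ}

/-- The basic summand. -/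
noncomputable def Ft (y : Fin (n + 2) → K) (i j : Fin (n + 2)) : K :=
  ((-1 : K) ^ (i : ℕ) * y i ^ (n + 1) * y j * Wv y i +
    (-1 : K) ^ (j : ℕ) * y j ^ (n + 1) * y i * Wv y j) / (y i - y j)

lemma Ft_def (y : Fin (n + 2) → K) (i j : Fin (n + 2)) :
    Ft y i j = ((-1 : K) ^ (i : ℕ) * y i ^ (n + 1) * y j * Wv y i +
      (-1 : K) ^ (j : ℕ) * y j ^ (n + 1) * y i * Wv y j) / (y i - y j) := rfl

lemma Ft_antisymm (y : Fin (n + 2) → K) (i j : Fin (n + 2)) :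
    Ft y i j = - Ft y j i := by
  rw [Ft_def, Ft_def, show y j - y i = -(y i - y j) by ring, div_neg, neg_neg]
  congr 1
  ring

lemma key_B (y : Fin (n + 2) → K) (hy : Function.Injective y) (j : Fin (n + 2)) :
    ∑ i : Fin (n + 2), Ft y i j = 0 := by
  classical
  rw [← Finset.add_sum_erase _ _ (Finset.mem_univ j)]
  have hjj : Ft y j j = 0 := by rw [Ft_def, sub_self, div_zero]
  rw [hjj, zero_add]
  have hterm : ∀ i ∈ Finset.univ.erase j, Ft y i j =
      ((-1 : K) ^ (i : ℕ) * Wv y i) * y j *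
          (∑ m ∈ Finset.range (n + 1), y i ^ m * y j ^ (n - m)) +
        ((-1 : K) ^ (j : ℕ) * Wv y j) * y j ^ (n + 1) +
        y j ^ (n + 2) *
          (((-1 : K) ^ (i : ℕ) * Wv y i + (-1 : K) ^ (j : ℕ) * Wv y j) / (y i - y j)) := by
    intro i hi
    have hd : y i - y j ≠ 0 :=
      sub_ne_zero_of_ne (fun h => (Finset.mem_erase.mp hi).1 (hy h))
    have hq := geom_sum₂_mul (y i) (y j) (n + 1)
    simp only [Nat.add_sub_cancel] at hq
    have expand : (-1 : K) ^ (i : ℕ) * y i ^ (n + 1) * y j * Wv y i +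
        (-1 : K) ^ (j : ℕ) * y j ^ (n + 1) * y i * Wv y j =
        (((-1 : K) ^ (i : ℕ) * Wv y i) * y j *
            (∑ m ∈ Finset.range (n + 1), y i ^ m * y j ^ (n - m)) +
          ((-1 : K) ^ (j : ℕ) * Wv y j) * y j ^ (n + 1)) * (y i - y j) +
        y j ^ (n + 2) * ((-1 : K) ^ (i : ℕ) * Wv y i + (-1 : K) ^ (j : ℕ) * Wv y j) := by
      linear_combination (-((-1 : K) ^ (i : ℕ) * Wv y i * y j)) * hq
    rw [Ft_def, expand, add_div, mul_div_assoc, div_self hd, mul_one, mul_div_assoc]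
  rw [Finset.sum_congr rfl hterm, Finset.sum_add_distrib, Finset.sum_add_distrib]
  -- the third sum vanishes by key_C
  have h3 : ∑ i ∈ Finset.univ.erase j, y j ^ (n + 2) *
      (((-1 : K) ^ (i : ℕ) * Wv y i + (-1 : K) ^ (j : ℕ) * Wv y j) / (y i - y j)) = 0 := by
    rw [← Finset.mul_sum, key_C y hy j, mul_zero]
  rw [h3, add_zero]
  -- the first sum via key_F0
  set p : Polynomial K := ∑ m ∈ Finset.range (n + 1),
    Polynomial.C (y j ^ (n - m)) * Polynomial.X ^ m with hp
  have hdeg : p.natDegree < n + 1 := by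
    rw [hp]
    apply Nat.lt_succ_of_le
    apply Polynomial.natDegree_sum_le_of_forall_le
    intro m hm
    refine le_trans (Polynomial.natDegree_C_mul_le _ _) ?_
    rw [Polynomial.natDegree_X_pow]
    exact Nat.lt_succ_iff.mp (Finset.mem_range.mp hm)
  have hpeval : ∀ i : Fin (n + 2), p.eval (y i) =
      ∑ m ∈ Finset.range (n + 1), y i ^ m * y j ^ (n - m) := by
    intro i
    rw [hp, Polynomial.eval_finset_sum]
    exact Finset.sum_congr rfl fun m _ => by
      rw [Polynomial.eval_mul, Polynomial.eval_C, Polynomial.eval_pow, Polynomial.eval_X]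
      ring
  have hF0 := key_F0 y p hdeg
  rw [← Finset.add_sum_erase _ _ (Finset.mem_univ j)] at hF0
  have h1 : ∑ i ∈ Finset.univ.erase j, ((-1 : K) ^ (i : ℕ) * Wv y i) * y j *
      (∑ m ∈ Finset.range (n + 1), y i ^ m * y j ^ (n - m)) =
      y j * ∑ i ∈ Finset.univ.erase j,
        (-1 : K) ^ (i : ℕ) * Wv y i * p.eval (y i) := by
    rw [Finset.mul_sum]
    exact Finset.sum_congr rfl fun i _ => by rw [hpeval i]; ring
  have h2 : ∑ i ∈ Finset.univ.erase j, (-1 : K) ^ (i : ℕ) * Wv y i * p.eval (y i) =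
      - ((-1 : K) ^ (j : ℕ) * Wv y j * p.eval (y j)) := by
    linear_combination hF0
  have hqj : p.eval (y j) = (n + 1 : ℕ) * y j ^ n := by
    rw [hpeval j]
    rw [Finset.sum_congr rfl (fun m hm => ?_), Finset.sum_const, Finset.card_range,
      nsmul_eq_mul]
    rw [← pow_add, Nat.add_sub_cancel' (Nat.lt_succ_iff.mp (Finset.mem_range.mp hm))]
  rw [h1, h2, hqj]
  -- the middle constant sum
  have hcard : (Finset.univ.erase j).card = n + 1 := by
    rw [Finset.card_erase_of_mem (Finset.mem_univ j), Finset.card_univ, Fintype.card_fin]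
    omega
  rw [Finset.sum_const, hcard, nsmul_eq_mul]
  push_cast
  ring

end Main2

/-- Let `N = n+2 > 1`, let `x₁,…,x_N` be independent variables over a
field `F` of characteristic zero, and let `i₁,…,i_k` be fixed distinct indices
(an embedding `ι : Fin k ↪ Fin N`).  Working in the field of fractions `K` of the
polynomial ring, the sum over `s ∈ {1,…,k}` and `i ∉ {i₁,…,i_k}` of
`((−1)^{i+1} x_i^{N−1} x_{i_s} Δ_i + (−1)^{i_s+1} x_{i_s}^{N−1} x_i Δ_{i_s}) / (x_i − x_{i_s})`
equals zero, where `Δ_j = Δ(x₁,…,x̂_j,…,x_N) = ∏_{a<b, a,b≠j}(x_a − x_b)` is the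
Vandermonde polynomial with `x_j` omitted.  Indices are 0-based, so
`(−1)^{i+1}` becomes `(−1)^{(i:ℕ)}`. -/
theorem stmt_18 {F : Type*} [Field F] [CharZero F] (n k : ℕ)
    (ι : Fin k ↪ Fin (n + 2)) :
    let K := FractionRing (MvPolynomial (Fin (n + 2)) F)
    let x : Fin (n + 2) → K := fun i => algebraMap (MvPolynomial (Fin (n + 2)) F) K (X i)
    let Δ : Fin (n + 2) → K := fun j =>
      ∏ a : Fin (n + 1), ∏ b ∈ Finset.Ioi a, (x (j.succAbove a) - x (j.succAbove b))
    (∑ s : Fin k, ∑ i ∈ Finset.univ.filter (fun i : Fin (n + 2) => ∀ t, i ≠ ι t),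
        ((-1 : K) ^ (i : ℕ) * x i ^ (n + 1) * x (ι s) * Δ i +
          (-1 : K) ^ ((ι s : Fin (n + 2)) : ℕ) * x (ι s) ^ (n + 1) * x i * Δ (ι s)) /
          (x i - x (ι s)))
      = 0 := by
  intro K x Δ
  classical
  have halg : Function.Injective (algebraMap (MvPolynomial (Fin (n + 2)) F) K) :=
    IsFractionRing.injective _ _
  have hy : Function.Injective x := fun i j h => MvPolynomial.X_injective (halg h)
  haveI : CharZero K := charZero_of_injective_algebraMap halg
  set e : K := ∏ a : Fin (n + 1), ∏ b ∈ Finset.Ioi a, (-1 : K) with he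
  have hΔ : ∀ j, Δ j = e * Wv x j := by
    intro j
    show (∏ a : Fin (n + 1), ∏ b ∈ Finset.Ioi a,
      (x (j.succAbove a) - x (j.succAbove b))) = _
    rw [Wv, he, ← Finset.prod_mul_distrib]
    refine Finset.prod_congr rfl fun a _ => ?_
    rw [← Finset.prod_mul_distrib]
    exact Finset.prod_congr rfl fun b _ => by ring
  have hsummand : ∀ (i j' : Fin (n + 2)),
      ((-1 : K) ^ (i : ℕ) * x i ^ (n + 1) * x j' * Δ i +
        (-1 : K) ^ (j' : ℕ) * x j' ^ (n + 1) * x i * Δ j') / (x i - x j')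
      = e * Ft x i j' := by
    intro i j'
    rw [hΔ i, hΔ j', Ft_def, ← mul_div_assoc]
    congr 1
    ring
  have hgoal : (∑ s : Fin k,
      ∑ i ∈ Finset.univ.filter (fun i : Fin (n + 2) => ∀ t, i ≠ ι t),
        ((-1 : K) ^ (i : ℕ) * x i ^ (n + 1) * x (ι s) * Δ i +
          (-1 : K) ^ ((ι s : Fin (n + 2)) : ℕ) * x (ι s) ^ (n + 1) * x i * Δ (ι s)) /
          (x i - x (ι s)))
      = e * ∑ s : Fin k,
          ∑ i ∈ Finset.univ.filter (fun i : Fin (n + 2) => ∀ t, i ≠ ι t),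
            Ft x i (ι s) := by
    rw [Finset.mul_sum]
    refine Finset.sum_congr rfl fun s _ => ?_
    rw [Finset.mul_sum]
    exact Finset.sum_congr rfl fun i _ => hsummand i (ι s)
  rw [hgoal]
  have hfilter : Finset.univ.filter (fun i : Fin (n + 2) => ∀ t, i ≠ ι t)
      = Finset.univ \ Finset.image ι Finset.univ := by
    ext i
    simp only [Finset.mem_filter, Finset.mem_univ, true_and, Finset.mem_sdiff,
      Finset.mem_image, not_exists]
    constructor
    · intro h t he'; exact h t he'.symm
    · intro h t he'; exact h t he'.symm
  have hinner : ∀ s : Fin k,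
      ∑ i ∈ Finset.univ.filter (fun i : Fin (n + 2) => ∀ t, i ≠ ι t), Ft x i (ι s)
      = - ∑ t : Fin k, Ft x (ι t) (ι s) := by
    intro s
    rw [hfilter, Finset.sum_sdiff_eq_sub (Finset.subset_univ _), key_B x hy (ι s),
      Finset.sum_image (fun a _ b _ h => ι.injective h), zero_sub]
  rw [Finset.sum_congr rfl fun s _ => hinner s]
  set T : K := ∑ s : Fin k, ∑ t : Fin k, Ft x (ι t) (ι s) with hT
  have hTneg : T = - T := by
    rw [hT]
    calc ∑ s : Fin k, ∑ t : Fin k, Ft x (ι t) (ι s)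
        = ∑ s : Fin k, ∑ t : Fin k, - Ft x (ι s) (ι t) :=
          Finset.sum_congr rfl fun s _ => Finset.sum_congr rfl fun t _ =>
            Ft_antisymm x (ι t) (ι s)
      _ = - ∑ s : Fin k, ∑ t : Fin k, Ft x (ι s) (ι t) := by
          simp only [Finset.sum_neg_distrib]
      _ = - ∑ t : Fin k, ∑ s : Fin k, Ft x (ι s) (ι t) := by rw [Finset.sum_comm]
      _ = - T := rfl
  have hT0 : T = 0 := by
    have h2 : (2 : K) * T = 0 := by
      rw [two_mul]; nth_rewrite 2 [hTneg]; ring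
    rcases mul_eq_zero.mp h2 with h | h
    · exact absurd h two_ne_zero
    · exact h
  have : (∑ s : Fin k, - ∑ t : Fin k, Ft x (ι t) (ι s)) = - T := by
    rw [hT, ← Finset.sum_neg_distrib]
  rw [this, hT0, neg_zero, mul_zero]
end
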